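/- For finite distributions: if p(x|a) is a kernel from a finite set 𝒜 to distributions on a finite set 𝒳, π is a distribution on 𝒜, and m(x) = ∑ₐ π(a)p(x|a), then the function K ↦ E[(1/K)∑ᵢ KL(p(·|A⁽ⁱ⁾) ‖ (1/K)∑ₖ p(·|A⁽ᵏ⁾))] with A⁽¹⁾,…,A⁽ᴷ⁾ i.i.d. ∼ π is bounded above by I(X;A) = ∑ₐ π(a) KL(p(·|a) ‖ m) for every K ≥ 1. -/

import Mathlib

open Finset

/-- The finite-`K` estimator of the mutual information, in expectation over
`K` i.i.d. actions, is a lower bound on `I(X;A)`. -/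
theorem stmt5 {A X : Type*} [Fintype A] [Fintype X]
    (p : A → X → ℝ) (π : A → ℝ)
    (hp0 : ∀ a x, 0 < p a x) (hp1 : ∀ a, ∑ x, p a x = 1)
    (hπ0 : ∀ a, 0 ≤ π a) (hπ1 : ∑ a, π a = 1)
    (K : ℕ) (hK : 1 ≤ K) :
    ∑ f : Fin K → A, (∏ i, π (f i)) *
        ((1 / (K : ℝ)) * ∑ i, ∑ x, p (f i) x *
          Real.log (p (f i) x / ((1 / (K : ℝ)) * ∑ k, p (f k) x)))
      ≤ ∑ a, π a * ∑ x, p a x *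
          Real.log (p a x / (∑ a', π a' * p a' x)) := by
  classical
  have hKpos : (0:ℝ) < K := by exact_mod_cast Nat.lt_of_lt_of_le Nat.zero_lt_one hK
  set m : X → ℝ := fun x => ∑ a', π a' * p a' x with hm
  have hm0 : ∀ x, 0 < m x := by
    intro x
    obtain ⟨a, ha⟩ : ∃ a, 0 < π a := by
      by_contra h
      push_neg at h
      have h0 : ∑ a, π a = 0 := Finset.sum_eq_zero fun a _ => le_antisymm (h a) (hπ0 a)
      rw [h0] at hπ1; norm_num at hπ1
    calc (0:ℝ) < π a * p a x := mul_pos ha (hp0 a x)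
      _ ≤ m x := Finset.single_le_sum (fun a' _ => mul_nonneg (hπ0 a') (hp0 a' x).le)
          (mem_univ a)
  have hmsum : ∑ x, m x = 1 := by
    simp only [hm]
    rw [Finset.sum_comm]
    simp only [← Finset.mul_sum, hp1, mul_one, hπ1]
  set g : A → ℝ := fun a => ∑ x, p a x * Real.log (p a x / m x) with hg
  -- pointwise (per sample-vector f) inequality
  have key : ∀ f : Fin K → A,
      (1 / (K : ℝ)) * ∑ i, ∑ x, p (f i) x *
          Real.log (p (f i) x / ((1 / (K : ℝ)) * ∑ k, p (f k) x))
        ≤ (1 / (K : ℝ)) * ∑ i, g (f i) := by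
    intro f
    set q : X → ℝ := fun x => (1 / (K : ℝ)) * ∑ k, p (f k) x with hq
    have hq0 : ∀ x, 0 < q x := by
      intro x
      have : (0:ℝ) < ∑ k, p (f k) x :=
        Finset.sum_pos (fun k _ => hp0 _ x) ⟨⟨0, hK⟩, mem_univ _⟩
      positivity
    have hqK : ∀ x, ∑ i, p (f i) x = (K : ℝ) * q x := by
      intro x; simp only [hq]; field_simp
    have hqsum : ∑ x, q x = 1 := by
      have e : ∑ x, q x = (1 / (K:ℝ)) * ∑ k : Fin K, ∑ x, p (f k) x := by
        simp only [hq, ← Finset.mul_sum]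
        rw [Finset.sum_comm]
      rw [e]
      simp only [hp1, Finset.sum_const, card_univ, Fintype.card_fin, nsmul_eq_mul, mul_one]
      field_simp
    have hmono : (0:ℝ) ≤ 1 / (K : ℝ) := by positivity
    apply mul_le_mul_of_nonneg_left _ hmono
    -- ∑ i ∑ x p log(p/q) ≤ ∑ i ∑ x p log(p/m)
    have step : ∀ i : Fin K, ∀ x, p (f i) x * (1 - m x / q x)
        ≤ p (f i) x * Real.log (p (f i) x / m x)
          - p (f i) x * Real.log (p (f i) x / q x) := by
      intro i x
      have h1 : p (f i) x * Real.log (p (f i) x / m x)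
          - p (f i) x * Real.log (p (f i) x / q x)
          = p (f i) x * (Real.log (q x) - Real.log (m x)) := by
        rw [Real.log_div (hp0 _ x).ne' (hm0 x).ne', Real.log_div (hp0 _ x).ne' (hq0 x).ne']
        ring
      rw [h1]
      have h2 : Real.log (m x / q x) ≤ m x / q x - 1 :=
        Real.log_le_sub_one_of_pos (div_pos (hm0 x) (hq0 x))
      rw [Real.log_div (hm0 x).ne' (hq0 x).ne'] at h2
      have := (hp0 (f i) x).le
      nlinarith
    have sum0 : ∑ i : Fin K, ∑ x, p (f i) x * (1 - m x / q x) = 0 := by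
      rw [Finset.sum_comm]
      have hrow : ∀ x, ∑ i : Fin K, p (f i) x * (1 - m x / q x)
          = (K : ℝ) * q x - (K : ℝ) * m x := by
        intro x
        rw [← Finset.sum_mul, hqK x]
        have hx := (hq0 x).ne'
        field_simp
      have e1 : ∑ x, (K:ℝ) * q x = (K:ℝ) := by
        rw [← Finset.mul_sum, hqsum, mul_one]
      have e2 : ∑ x, (K:ℝ) * m x = (K:ℝ) := by
        rw [← Finset.mul_sum, hmsum, mul_one]
      rw [Finset.sum_congr rfl fun x _ => hrow x, Finset.sum_sub_distrib, e1, e2]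
      ring
    have hle : ∑ i : Fin K, ∑ x, p (f i) x * (1 - m x / q x)
        ≤ ∑ i : Fin K, ∑ x, (p (f i) x * Real.log (p (f i) x / m x)
          - p (f i) x * Real.log (p (f i) x / q x)) :=
      Finset.sum_le_sum fun i _ => Finset.sum_le_sum fun x _ => step i x
    rw [sum0] at hle
    simp only [Finset.sum_sub_distrib] at hle
    simp only [hg]
    linarith
  -- marginalization
  have marg : ∀ i : Fin K, ∑ f : Fin K → A, (∏ j, π (f j)) * g (f i)
      = ∑ a, π a * g a := by
    intro i
    have h1 : ∀ f : Fin K → A, (∏ j, π (f j)) * g (f i)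
        = ∏ j, (if j = i then π (f j) * g (f j) else π (f j)) := by
      intro f
      have : ∀ j : Fin K, (if j = i then π (f j) * g (f j) else π (f j))
          = π (f j) * (if j = i then g (f j) else 1) := by
        intro j; split <;> ring
      simp only [this, Finset.prod_mul_distrib]
      rw [Finset.prod_ite_eq' univ i (fun j => g (f j))]
      simp
    simp only [h1]
    rw [← Fintype.prod_sum (fun j a => if j = i then π a * g a else π a)]
    have h2 : ∀ j : Fin K, (∑ a, if j = i then π a * g a else π a)
        = if j = i then ∑ a, π a * g a else 1 := by
      intro j; split
      · rfl
      · exact hπ1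
    simp only [h2]
    rw [Finset.prod_ite_eq' univ i (fun _ => ∑ a, π a * g a)]
    simp
  calc ∑ f : Fin K → A, (∏ i, π (f i)) *
        ((1 / (K : ℝ)) * ∑ i, ∑ x, p (f i) x *
          Real.log (p (f i) x / ((1 / (K : ℝ)) * ∑ k, p (f k) x)))
      ≤ ∑ f : Fin K → A, (∏ j, π (f j)) * ((1 / (K : ℝ)) * ∑ i, g (f i)) :=
        Finset.sum_le_sum fun f _ => mul_le_mul_of_nonneg_left (key f)
          (Finset.prod_nonneg fun j _ => hπ0 _)
    _ = ∑ f : Fin K → A, ∑ i : Fin K, (1 / (K:ℝ)) * ((∏ j, π (f j)) * g (f i)) := by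
        refine Finset.sum_congr rfl fun f _ => ?_
        rw [Finset.mul_sum, Finset.mul_sum]
        exact Finset.sum_congr rfl fun i _ => by ring
    _ = ∑ i : Fin K, ∑ f : Fin K → A, (1 / (K:ℝ)) * ((∏ j, π (f j)) * g (f i)) :=
        Finset.sum_comm
    _ = ∑ _i : Fin K, (1 / (K:ℝ)) * ∑ a, π a * g a := by
        refine Finset.sum_congr rfl fun i _ => ?_
        rw [← Finset.mul_sum, marg i]
    _ = ∑ a, π a * g a := by
        rw [Finset.sum_const, card_univ, Fintype.card_fin, nsmul_eq_mul]
        field_simp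
    _ = ∑ a, π a * ∑ x, p a x * Real.log (p a x / (∑ a', π a' * p a' x)) := rfl
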